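/- The extended Lorentzian distance on the c-completion is well defined: if (qₙ) and (rₙ) are past chains generating the same IF F (i.e. I⁺[(qₙ)] = I⁺[(rₙ)] = F), and (p'ₙ), (s'ₙ) are future chains generating the same IP P' (I⁻[(p'ₙ)] = I⁻[(s'ₙ)] = P'), then limₙ τ(qₙ,p'ₙ) = limₙ τ(rₙ,s'ₙ). -/

import Mathlib

open Filter Topology Set ENNReal

private lemma chainPosPast {X : Type*} (τ : X → X → ℝ≥0∞)
    (hrev : ∀ x y z : X, 0 < τ x y → 0 < τ y z → τ x y + τ y z ≤ τ x z)
    (r : ℕ → X) (hr : ∀ n, 0 < τ (r (n + 1)) (r n)) :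
    ∀ {n m : ℕ}, n < m → 0 < τ (r m) (r n) := by
  intro n m hnm
  induction m with
  | zero => omega
  | succ m ih =>
    rcases Nat.lt_succ_iff_lt_or_eq.mp hnm with h | h
    · have h1 := ih h
      have := hrev (r (m+1)) (r m) (r n) (hr m) h1
      exact (h1.trans_le le_add_self).trans_le this
    · subst h; exact hr n

private lemma chainPosFut {X : Type*} (τ : X → X → ℝ≥0∞)
    (hrev : ∀ x y z : X, 0 < τ x y → 0 < τ y z → τ x y + τ y z ≤ τ x z)
    (s' : ℕ → X) (hs : ∀ n, 0 < τ (s' n) (s' (n + 1))) :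
    ∀ {n m : ℕ}, n < m → 0 < τ (s' n) (s' m) := by
  intro n m h
  exact chainPosPast (fun x y => τ y x)
    (fun x y z h1 h2 => by
      have := hrev z y x h2 h1
      simpa [add_comm] using this) s' hs h

private lemma aux_le {X : Type*} (τ : X → X → ℝ≥0∞)
    (hrev : ∀ x y z : X, 0 < τ x y → 0 < τ y z → τ x y + τ y z ≤ τ x z)
    (q r p' s' : ℕ → X)
    (hq : ∀ n, 0 < τ (q (n + 1)) (q n)) (hr : ∀ n, 0 < τ (r (n + 1)) (r n))
    (hp : ∀ n, 0 < τ (p' n) (p' (n + 1))) (hs : ∀ n, 0 < τ (s' n) (s' (n + 1)))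
    (hF : {z | ∃ n, 0 < τ (q n) z} = {z | ∃ n, 0 < τ (r n) z})
    (hP : {z | ∃ n, 0 < τ z (p' n)} = {z | ∃ n, 0 < τ z (s' n)})
    (l₁ l₂ : ℝ≥0∞)
    (h₁ : Tendsto (fun n => τ (q n) (p' n)) atTop (𝓝 l₁))
    (h₂ : Tendsto (fun n => τ (r n) (s' n)) atTop (𝓝 l₂)) :
    l₁ ≤ l₂ := by
  refine le_of_tendsto' h₁ ?_
  intro n
  rcases eq_or_lt_of_le (zero_le : 0 ≤ τ (q n) (p' n)) with h0 | h0
  · exact h0 ▸ (zero_le : (0 : ℝ≥0∞) ≤ l₂)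
  -- q n ∈ I⁺[q] = I⁺[r]
  have hqn : q n ∈ {z | ∃ k, 0 < τ (r k) z} := by
    rw [← hF]; exact ⟨n + 1, hq n⟩
  obtain ⟨k, hk⟩ := hqn
  -- p' n ∈ I⁻[p'] = I⁻[s']
  have hpn : p' n ∈ {z | ∃ m, 0 < τ z (s' m)} := by
    rw [← hP]; exact ⟨n + 1, hp n⟩
  obtain ⟨m, hm⟩ := hpn
  -- τ (r k) (s' m) ≥ τ (q n) (p' n)
  have h1 : τ (r k) (q n) + τ (q n) (p' n) ≤ τ (r k) (p' n) := hrev _ _ _ hk h0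
  have h1pos : 0 < τ (r k) (p' n) := (h0.trans_le le_add_self).trans_le h1
  have h2' : τ (r k) (p' n) + τ (p' n) (s' m) ≤ τ (r k) (s' m) := hrev _ _ _ h1pos hm
  have key : τ (q n) (p' n) ≤ τ (r k) (s' m) := by
    calc τ (q n) (p' n) ≤ τ (r k) (q n) + τ (q n) (p' n) := le_add_self
      _ ≤ τ (r k) (p' n) := h1
      _ ≤ τ (r k) (p' n) + τ (p' n) (s' m) := le_self_add
      _ ≤ τ (r k) (s' m) := h2'
  have keypos : 0 < τ (r k) (s' m) := lt_of_lt_of_le h0 key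
  -- τ (r N) (s' N) ≥ τ (r k) (s' m) for large N
  have hev : ∀ᶠ N in atTop, τ (r k) (s' m) ≤ τ (r N) (s' N) := by
    filter_upwards [eventually_gt_atTop (max k m)] with N hN
    have hNk : k < N := lt_of_le_of_lt (le_max_left _ _) hN
    have hNm : m < N := lt_of_le_of_lt (le_max_right _ _) hN
    have ha : 0 < τ (r N) (r k) := chainPosPast τ hrev r hr hNk
    have hb : 0 < τ (s' m) (s' N) := chainPosFut τ hrev s' hs hNm
    have t1 : τ (r N) (r k) + τ (r k) (s' m) ≤ τ (r N) (s' m) := hrev _ _ _ ha keypos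
    have t1pos : 0 < τ (r N) (s' m) := (keypos.trans_le le_add_self).trans_le t1
    have t2 : τ (r N) (s' m) + τ (s' m) (s' N) ≤ τ (r N) (s' N) := hrev _ _ _ t1pos hb
    calc τ (r k) (s' m) ≤ τ (r N) (r k) + τ (r k) (s' m) := le_add_self
      _ ≤ τ (r N) (s' m) := t1
      _ ≤ τ (r N) (s' m) + τ (s' m) (s' N) := le_self_add
      _ ≤ τ (r N) (s' N) := t2
  have : τ (r k) (s' m) ≤ l₂ := ge_of_tendsto h₂ hev
  exact key.trans this

theorem stmt8 {X : Type*} [TopologicalSpace X] (τ : X → X → ℝ≥0∞)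
    (hlsc : LowerSemicontinuous fun p : X × X => τ p.1 p.2)
    (hrev : ∀ x y z : X, 0 < τ x y → 0 < τ y z → τ x y + τ y z ≤ τ x z)
    (q r p' s' : ℕ → X)
    (hq : ∀ n, 0 < τ (q (n + 1)) (q n)) (hr : ∀ n, 0 < τ (r (n + 1)) (r n))
    (hp : ∀ n, 0 < τ (p' n) (p' (n + 1))) (hs : ∀ n, 0 < τ (s' n) (s' (n + 1)))
    (hF : {z | ∃ n, 0 < τ (q n) z} = {z | ∃ n, 0 < τ (r n) z})
    (hP : {z | ∃ n, 0 < τ z (p' n)} = {z | ∃ n, 0 < τ z (s' n)})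
    (l₁ l₂ : ℝ≥0∞)
    (h₁ : Tendsto (fun n => τ (q n) (p' n)) atTop (𝓝 l₁))
    (h₂ : Tendsto (fun n => τ (r n) (s' n)) atTop (𝓝 l₂)) :
    l₁ = l₂ := by
  exact le_antisymm
    (aux_le τ hrev q r p' s' hq hr hp hs hF hP l₁ l₂ h₁ h₂)
    (aux_le τ hrev r q s' p' hr hq hs hp hF.symm hP.symm l₂ l₁ h₂ h₁)
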